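/- The internal spectral triple of the Standard Model with one generation is not spin: the operator X : H_F → H_F, X(ξ) := e₅₅ ξ (1₄ − e₁₁), commutes with π_F(a) and with [D_F, π_F(a)] for every a ∈ A_F (hence X lies in the commutant of Cl_{D_F}(A_F)), but X does not belong to the complex linear span of J_F π_F(A_F) J_F; consequently the commutant of Cl_{D_F}(A_F) is not equal to the complex linear span of J_F π_F(A_F) J_F. -/

import Mathlib

open Matrix ComplexConjugate

noncomputable section

/-- The internal Hilbert space of the Standard Model (one generation):
8×4 complex matrices. -/
abbrev HF : Type := Matrix (Fin 8) (Fin 4) ℂ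

abbrev M8 : Type := Matrix (Fin 8) (Fin 8) ℂ
abbrev M4 : Type := Matrix (Fin 4) (Fin 4) ℂ
abbrev M3 : Type := Matrix (Fin 3) (Fin 3) ℂ
abbrev M2 : Type := Matrix (Fin 2) (Fin 2) ℂ

/-- A 2×2 complex matrix is of quaternionic form. -/
def IsQuat (q : M2) : Prop :=
  ∃ α β : ℂ, q 0 0 = α ∧ q 0 1 = β ∧ q 1 0 = -conj β ∧ q 1 1 = conj α

/-- The block-diagonal matrix with diagonal blocks λ, conj λ, q, λ, m
(of sizes 1,1,2,1,3). -/
def Pmat (l : ℂ) (q : M2) (m : M3) : M8 :=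
  Matrix.of fun i j =>
    if i = 0 ∧ j = 0 then l
    else if i = 1 ∧ j = 1 then conj l
    else if h : 2 ≤ (i : ℕ) ∧ (i : ℕ) < 4 ∧ 2 ≤ (j : ℕ) ∧ (j : ℕ) < 4 then
      q ⟨(i : ℕ) - 2, by omega⟩ ⟨(j : ℕ) - 2, by omega⟩
    else if i = 4 ∧ j = 4 then l
    else if h : 5 ≤ (i : ℕ) ∧ 5 ≤ (j : ℕ) then
      m ⟨(i : ℕ) - 5, by have := i.isLt; omega⟩ ⟨(j : ℕ) - 5, by have := j.isLt; omega⟩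
    else 0

/-- The operator ξ ↦ A ξ B on H_F. -/
def lrOp (A : M8) (B : M4) : Module.End ℂ HF where
  toFun ξ := A * ξ * B
  map_add' x y := by simp [Matrix.mul_add, Matrix.add_mul]
  map_smul' c x := by simp [Matrix.mul_smul, Matrix.smul_mul]

/-- Left multiplication by an 8×8 matrix as an operator on H_F. -/
def lmul (A : M8) : Module.End ℂ HF where
  toFun ξ := A * ξ
  map_add' x y := Matrix.mul_add A x y
  map_smul' c x := by simp [Matrix.mul_smul]

/-- The representation π_F of A_F = ℂ ⊕ ℍ ⊕ M₃(ℂ) on H_F. -/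
def piF (l : ℂ) (q : M2) (m : M3) : Module.End ℂ HF := lmul (Pmat l q m)

/-- The image π_F(A_F) as a set of operators. -/
def piFSet : Set (Module.End ℂ HF) := { T | ∃ l q m, IsQuat q ∧ T = piF l q m }

/-- The real structure J_F: ξ = [v₁; v₂] ↦ [v₂*; v₁*]. -/
def JF (ξ : HF) : HF :=
  Matrix.of fun i j =>
    if h : (i : ℕ) < 4 then
      conj (ξ ⟨(j : ℕ) + 4, by have := j.isLt; omega⟩ ⟨(i : ℕ), h⟩)
    else
      conj (ξ ⟨(j : ℕ), by have := j.isLt; omega⟩ ⟨(i : ℕ) - 4, by have := i.isLt; omega⟩)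

lemma JF_add (x y : HF) : JF (x + y) = JF x + JF y := by
  funext i j
  by_cases h : (i : ℕ) < 4 <;> simp [JF, h]

lemma JF_smul (c : ℂ) (x : HF) : JF (c • x) = conj c • JF x := by
  funext i j
  by_cases h : (i : ℕ) < 4 <;> simp [JF, h]

/-- Conjugation T ↦ J_F ∘ T ∘ J_F, a ℂ-linear operator on H_F. -/
def conjByJ (T : Module.End ℂ HF) : Module.End ℂ HF where
  toFun ξ := JF (T (JF ξ))
  map_add' x y := by
    show JF (T (JF (x + y))) = JF (T (JF x)) + JF (T (JF y))
    rw [JF_add, map_add, JF_add]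
  map_smul' c x := by
    show JF (T (JF (c • x))) = c • JF (T (JF x))
    rw [JF_smul, _root_.map_smul, JF_smul, Complex.conj_conj]

abbrev E8 (i j : Fin 8) : M8 := Matrix.single i j 1
abbrev E4 (i j : Fin 4) : M4 := Matrix.single i j 1

def M1mat (Yν Ye YR : ℂ) : M8 :=
  conj Yν • E8 0 2 + conj Ye • E8 1 3 + Yν • E8 2 0 + Ye • E8 3 1
    + conj YR • E8 0 4 + YR • E8 4 0

def M2mat (Yu Yd : ℂ) : M8 :=
  conj Yu • E8 0 2 + conj Yd • E8 1 3 + Yu • E8 2 0 + Yd • E8 3 1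

def N1mat (Yν Ye : ℂ) : M4 :=
  conj Yν • E4 0 2 + conj Ye • E4 1 3 + Yν • E4 2 0 + Ye • E4 3 1

def N2mat (Yu Yd : ℂ) : M4 :=
  conj Yu • E4 0 2 + conj Yd • E4 1 3 + Yu • E4 2 0 + Yd • E4 3 1

/-- The internal Dirac operator D_F (one generation). -/
def DF (Yν Ye Yu Yd YR : ℂ) : Module.End ℂ HF :=
  lrOp (M1mat Yν Ye YR) (E4 0 0) + lrOp (M2mat Yu Yd) (1 - E4 0 0)
    + lrOp (E8 4 4) (N1mat Yν Ye) + lrOp (E8 5 5 + E8 6 6 + E8 7 7) (N2mat Yu Yd)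

/-- Generating set of the Clifford algebra: π_F(A_F) ∪ [D_F, π_F(A_F)]. -/
def genSet (Yν Ye Yu Yd YR : ℂ) : Set (Module.End ℂ HF) :=
  piFSet ∪ { T | ∃ l q m, IsQuat q ∧
    T = DF Yν Ye Yu Yd YR * piF l q m - piF l q m * DF Yν Ye Yu Yd YR }

/-- The Clifford algebra Cl_{D_F}(A_F). -/
def ClDF (Yν Ye Yu Yd YR : ℂ) : Subalgebra ℂ (Module.End ℂ HF) :=
  Algebra.adjoin ℂ (genSet Yν Ye Yu Yd YR)

/-- Grading χ_F. -/
def G1 : M8 := Matrix.diagonal ![1, 1, -1, -1, 0, 0, 0, 0]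
def G2 : M8 := Matrix.diagonal ![0, 0, 0, 0, -1, -1, -1, -1]
def G3 : M4 := Matrix.diagonal ![1, 1, -1, -1]

def chiF : Module.End ℂ HF := lmul G1 + lrOp G2 G3

/-- The block-diagonal 8×8 matrix diag(a, λ, m) with blocks of sizes 4, 1, 3. -/
def diagALM (a : M4) (l : ℂ) (m : M3) : M8 :=
  Matrix.of fun i j =>
    if h : (i : ℕ) < 4 ∧ (j : ℕ) < 4 then a ⟨(i : ℕ), h.1⟩ ⟨(j : ℕ), h.2⟩
    else if i = 4 ∧ j = 4 then l
    else if h : 5 ≤ (i : ℕ) ∧ 5 ≤ (j : ℕ) then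
      m ⟨(i : ℕ) - 5, by have := i.isLt; omega⟩ ⟨(j : ℕ) - 5, by have := j.isLt; omega⟩
    else 0

/-- The operator ξ ↦ diag(a,λ,m) ξ e₁₁ + diag(b,λ,m) ξ (1₄ − e₁₁). -/
def Bop (a b : M4) (l : ℂ) (m : M3) : Module.End ℂ HF :=
  lrOp (diagALM a l m) (E4 0 0) + lrOp (diagALM b l m) (1 - E4 0 0)

/-- The algebra B of Lemma (B), as a set of operators. -/
def BSet : Set (Module.End ℂ HF) := { T | ∃ a b l m, T = Bop a b l m }

/-- The commutant C_F of P(A_F) in M₈(ℂ), as a set. -/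
def CFSet : Set M8 := { X | ∃ q11 q12 q21 q22 α β δ : ℂ,
  X = q11 • E8 0 0 + q12 • E8 0 4 + q21 • E8 4 0 + q22 • E8 4 4
    + α • E8 1 1 + β • (E8 2 2 + E8 3 3) + δ • (E8 5 5 + E8 6 6 + E8 7 7) }

/-- The block-diagonal 4×4 matrix diag(λ, m). -/
def diagLM (l : ℂ) (m : M3) : M4 :=
  Matrix.of fun i j =>
    if i = 0 ∧ j = 0 then l
    else if h : 1 ≤ (i : ℕ) ∧ 1 ≤ (j : ℕ) then
      m ⟨(i : ℕ) - 1, by have := i.isLt; omega⟩ ⟨(j : ℕ) - 1, by have := j.isLt; omega⟩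
    else 0

/-- The block-diagonal 4×4 matrix diag(λ, conj λ, q). -/
def diagLLQ (l : ℂ) (q : M2) : M4 :=
  Matrix.of fun i j =>
    if i = 0 ∧ j = 0 then l
    else if i = 1 ∧ j = 1 then conj l
    else if h : 2 ≤ (i : ℕ) ∧ 2 ≤ (j : ℕ) then
      q ⟨(i : ℕ) - 2, by have := i.isLt; omega⟩ ⟨(j : ℕ) - 2, by have := j.isLt; omega⟩
    else 0

/-- E_u = diag(1₄, 0₄) ∈ M₈(ℂ). -/
def Eu : M8 := Matrix.of fun i j => if i = j ∧ (i : ℕ) < 4 then 1 else 0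

/-- E_l = diag(0₄, 1₄) ∈ M₈(ℂ). -/
def El : M8 := Matrix.of fun i j => if i = j ∧ 4 ≤ (i : ℕ) then 1 else 0

/-- The block-diagonal 8×8 matrix diag(b, c) with two 4×4 blocks. -/
def diag44 (b c : M4) : M8 :=
  Matrix.of fun i j =>
    if h : (i : ℕ) < 4 ∧ (j : ℕ) < 4 then b ⟨(i : ℕ), h.1⟩ ⟨(j : ℕ), h.2⟩
    else if h : 4 ≤ (i : ℕ) ∧ 4 ≤ (j : ℕ) then
      c ⟨(i : ℕ) - 4, by have := i.isLt; omega⟩ ⟨(j : ℕ) - 4, by have := j.isLt; omega⟩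
    else 0


section Aux

lemma lrOp_apply (A : M8) (B : M4) (ξ : HF) : lrOp A B ξ = A * ξ * B := rfl

lemma lrOp_mul (A C : M8) (B D : M4) : lrOp A B * lrOp C D = lrOp (A * C) (D * B) := by
  ext ξ : 1
  simp only [Module.End.mul_apply, lrOp_apply, Matrix.mul_assoc]

lemma lrOp_zero_right (A : M8) : lrOp A (0 : M4) = 0 := by
  ext ξ : 1; simp [lrOp_apply]

lemma lrOp_zero_left (B : M4) : lrOp (0 : M8) B = 0 := by
  ext ξ : 1; simp [lrOp_apply]

lemma lmul_eq (A : M8) : lmul A = lrOp A (1 : M4) := by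
  ext ξ : 1; rw [lrOp_apply, Matrix.mul_one]; rfl

set_option maxHeartbeats 1000000 in
lemma E44_Pmat (l : ℂ) (q : M2) (m : M3) : E8 4 4 * Pmat l q m = Pmat l q m * E8 4 4 := by
  funext i j
  fin_cases i <;> fin_cases j <;>
    simp (config := { decide := true })
      [Matrix.mul_apply, Fin.sum_univ_eight, Pmat, Matrix.single, Matrix.of_apply]

lemma E11_q0 : (E4 0 0) * (1 - E4 0 0) = 0 := by
  simp [Matrix.mul_sub]

lemma q0_E11 : (1 - E4 0 0) * (E4 0 0) = 0 := by
  simp [Matrix.sub_mul]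

lemma q0_q0 : ((1 - E4 0 0) : M4) * (1 - E4 0 0) = 1 - E4 0 0 := by
  simp [Matrix.sub_mul, Matrix.mul_sub]

lemma E44_M2 (Yu Yd : ℂ) : E8 4 4 * M2mat Yu Yd = 0 := by
  simp (config := { decide := true })
    [M2mat, Matrix.mul_add, Matrix.mul_smul, Matrix.single_mul_single_of_ne]

lemma M2_E44 (Yu Yd : ℂ) : M2mat Yu Yd * E8 4 4 = 0 := by
  simp (config := { decide := true })
    [M2mat, Matrix.add_mul, Matrix.smul_mul, Matrix.single_mul_single_of_ne]

lemma E44_E567 : E8 4 4 * (E8 5 5 + E8 6 6 + E8 7 7) = 0 := by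
  simp (config := { decide := true })
    [Matrix.mul_add, Matrix.single_mul_single_of_ne]

lemma E567_E44 : (E8 5 5 + E8 6 6 + E8 7 7) * E8 4 4 = 0 := by
  simp (config := { decide := true })
    [Matrix.add_mul, Matrix.single_mul_single_of_ne]

lemma E44_E44 : E8 4 4 * E8 4 4 = E8 4 4 := by
  simp

lemma E8_mul_ne {i j k l : Fin 8} (h : j ≠ k) : E8 i j * E8 k l = 0 :=
Matrix.single_mul_single_of_ne (h := h) ..

lemma XDF (Yν Ye Yu Yd YR : ℂ) :
    lrOp (E8 4 4) (1 - E4 0 0) * DF Yν Ye Yu Yd YR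
      = lrOp (E8 4 4) (N1mat Yν Ye * (1 - E4 0 0)) := by
  simp only [DF, mul_add, lrOp_mul, E11_q0, q0_q0, E44_M2, E44_E44,
    E8_mul_ne (show (4:Fin 8) ≠ 5 by decide), E8_mul_ne (show (4:Fin 8) ≠ 6 by decide),
    E8_mul_ne (show (4:Fin 8) ≠ 7 by decide),
    lrOp_zero_right, lrOp_zero_left, add_zero, zero_add]

lemma DFX (Yν Ye Yu Yd YR : ℂ) :
    DF Yν Ye Yu Yd YR * lrOp (E8 4 4) (1 - E4 0 0)
      = lrOp (E8 4 4) ((1 - E4 0 0) * N1mat Yν Ye) := by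
  simp only [DF, add_mul, lrOp_mul, q0_E11, q0_q0, M2_E44, E44_E44,
    E8_mul_ne (show (5:Fin 8) ≠ 4 by decide), E8_mul_ne (show (6:Fin 8) ≠ 4 by decide),
    E8_mul_ne (show (7:Fin 8) ≠ 4 by decide),
    lrOp_zero_right, lrOp_zero_left, add_zero, zero_add]

end Aux

section Aux2

set_option maxHeartbeats 1000000 in
lemma key1 (l : ℂ) (q : M2) (m : M3) :
    (conjByJ (piF l q m)) (Matrix.single 4 1 (1:ℂ)) 4 1 = l := by
  show JF (Pmat l q m * JF (Matrix.single 4 1 (1:ℂ))) 4 1 = l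
  simp (config := { decide := true })
    [JF, Pmat, Matrix.mul_apply, Fin.sum_univ_eight, Matrix.single, Matrix.of_apply]

set_option maxHeartbeats 1000000 in
lemma key2 (l : ℂ) (q : M2) (m : M3) :
    (conjByJ (piF l q m)) (Matrix.single 5 1 (1:ℂ)) 5 1 = l := by
  show JF (Pmat l q m * JF (Matrix.single 5 1 (1:ℂ))) 5 1 = l
  simp (config := { decide := true })
    [JF, Pmat, Matrix.mul_apply, Fin.sum_univ_eight, Matrix.single, Matrix.of_apply]

lemma keyX1 :
    (lrOp (E8 4 4) (1 - E4 0 0)) (Matrix.single 4 1 (1:ℂ)) 4 1 = 1 := by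
  rw [lrOp_apply]
  simp (config := { decide := true })
    [Matrix.mul_apply, Fin.sum_univ_eight, Fin.sum_univ_four, Matrix.single,
     Matrix.of_apply, Matrix.sub_apply, Matrix.one_apply]

lemma keyX2 :
    (lrOp (E8 4 4) (1 - E4 0 0)) (Matrix.single 5 1 (1:ℂ)) 5 1 = 0 := by
  rw [lrOp_apply]
  simp (config := { decide := true })
    [Matrix.mul_apply, Fin.sum_univ_eight, Fin.sum_univ_four, Matrix.single,
     Matrix.of_apply, Matrix.sub_apply, Matrix.one_apply]

/-- The separating linear functional. -/
def phiF : Module.End ℂ HF →ₗ[ℂ] ℂ where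
  toFun T := T (Matrix.single 4 1 (1:ℂ)) 4 1 - T (Matrix.single 5 1 (1:ℂ)) 5 1
  map_add' S T := by simp [Matrix.add_apply]; ring
  map_smul' c T := by simp [Matrix.smul_apply, smul_eq_mul]; ring

end Aux2

/-- the internal spectral triple is not spin. -/
theorem stmt_11 (Yν Ye Yu Yd YR : ℂ) :
    (∀ l q m, IsQuat q →
      Commute (lrOp (E8 4 4) (1 - E4 0 0)) (piF l q m) ∧
      Commute (lrOp (E8 4 4) (1 - E4 0 0))
        (DF Yν Ye Yu Yd YR * piF l q m - piF l q m * DF Yν Ye Yu Yd YR)) ∧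
    lrOp (E8 4 4) (1 - E4 0 0)
      ∈ Subalgebra.centralizer ℂ (ClDF Yν Ye Yu Yd YR : Set (Module.End ℂ HF)) ∧
    lrOp (E8 4 4) (1 - E4 0 0) ∉ Submodule.span ℂ (conjByJ '' piFSet) ∧
    (Subalgebra.centralizer ℂ (ClDF Yν Ye Yu Yd YR : Set (Module.End ℂ HF)) :
        Set (Module.End ℂ HF))
      ≠ ↑(Submodule.span ℂ (conjByJ '' piFSet)) := by
  set X : Module.End ℂ HF := lrOp (E8 4 4) (1 - E4 0 0) with hX
  set D : Module.End ℂ HF := DF Yν Ye Yu Yd YR with hD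
  -- swap lemma
  have hswap : ∀ (l : ℂ) (q : M2) (m : M3) (K : M4),
      lrOp (E8 4 4) K * piF l q m = piF l q m * lrOp (E8 4 4) K := by
    intro l q m K
    rw [piF, lmul_eq, lrOp_mul, lrOp_mul, Matrix.one_mul, Matrix.mul_one, E44_Pmat]
  have hXpi : ∀ (l : ℂ) (q : M2) (m : M3), X * piF l q m = piF l q m * X :=
    fun l q m => hswap l q m (1 - E4 0 0)
  have e1 := XDF Yν Ye Yu Yd YR
  rw [← hX, ← hD] at e1
  have e2 := DFX Yν Ye Yu Yd YR
  rw [← hX, ← hD] at e2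
  have hXC : ∀ (l : ℂ) (q : M2) (m : M3),
      X * (D * piF l q m - piF l q m * D) = 0 := by
    intro l q m
    rw [mul_sub, ← mul_assoc, e1, ← mul_assoc, hXpi l q m, mul_assoc, e1, hswap, sub_self]
  have hCX : ∀ (l : ℂ) (q : M2) (m : M3),
      (D * piF l q m - piF l q m * D) * X = 0 := by
    intro l q m
    rw [sub_mul, mul_assoc, ← hXpi l q m, ← mul_assoc, e2, mul_assoc, e2, hswap, sub_self]
  have part1 : ∀ l q m, IsQuat q → Commute X (piF l q m) ∧
      Commute X (D * piF l q m - piF l q m * D) := by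
    intro l q m _
    exact ⟨hXpi l q m, (hXC l q m).trans (hCX l q m).symm⟩
  have part2 : X ∈ Subalgebra.centralizer ℂ (ClDF Yν Ye Yu Yd YR : Set (Module.End ℂ HF)) := by
    have hgen : genSet Yν Ye Yu Yd YR ⊆
        (Subalgebra.centralizer ℂ ({X} : Set (Module.End ℂ HF)) : Set (Module.End ℂ HF)) := by
      rintro T (⟨l, q, m, hq, rfl⟩ | ⟨l, q, m, hq, rfl⟩) <;>
        · rw [SetLike.mem_coe, Subalgebra.mem_centralizer_iff]
          rintro g rfl
          first
            | exact (part1 l q m hq).1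
            | exact (part1 l q m hq).2
    have hle : ClDF Yν Ye Yu Yd YR ≤ Subalgebra.centralizer ℂ ({X} : Set (Module.End ℂ HF)) :=
      Algebra.adjoin_le hgen
    rw [Subalgebra.mem_centralizer_iff]
    intro g hg
    exact ((Subalgebra.mem_centralizer_iff ℂ).1 (hle hg) X rfl).symm
  have part3 : X ∉ Submodule.span ℂ (conjByJ '' piFSet) := by
    intro hmem
    have hker : Submodule.span ℂ (conjByJ '' piFSet) ≤ LinearMap.ker phiF := by
      rw [Submodule.span_le]
      rintro T ⟨S, ⟨l, q, m, hq, rfl⟩, rfl⟩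
      simp only [SetLike.mem_coe, LinearMap.mem_ker]
      show phiF (conjByJ (piF l q m)) = 0
      simp only [phiF, LinearMap.coe_mk, AddHom.coe_mk, key1, key2, sub_self]
    have h0 : phiF X = 0 := LinearMap.mem_ker.1 (hker hmem)
    have h1 : phiF X = 1 := by
      simp only [phiF, LinearMap.coe_mk, AddHom.coe_mk, hX, keyX1, keyX2, sub_zero]
    rw [h0] at h1
    exact zero_ne_one h1
  refine ⟨part1, part2, part3, fun heq => part3 ?_⟩
  rw [← SetLike.mem_coe, ← heq]
  exact part2

end
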